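/- Let R be a (possibly noncommutative) ring with unity, let h ≥ 0 and m, n ≥ 1 be integers, and let x, y, a, b ∈ R satisfy: (i) there exist c_0, …, c_h ∈ R with c_h ≠ 0 such that y^k x^k = ∑_{ℓ=0}^{h} k^ℓ • c_ℓ for every k ≥ 0 (• denoting natural number scalar multiplication in R); (ii) a^n = 0; (iii) b^m = 0; (iv) a x = x a; (v) b y = y b. Then the sequence k ↦ (y+b)^k (x+a)^k is an arithmetic progression of order n + m + h − 2 in the additive group of R. -/
import Mathlib

open Finset Function

/-- `u` is an arithmetic progression of order `h` in an additive commutative group. -/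
def IsAPOfOrder {G : Type*} [AddCommGroup G] (u : ℕ → G) (h : ℕ) : Prop :=
  ∀ n : ℕ, ∑ k ∈ Finset.range (h + 2), ((-1 : ℤ) ^ (h + 1 - k) * ((h + 1).choose k)) • u (n + k) = 0

section helpers

variable {G : Type*} [AddCommGroup G]

lemma fd_zero (p : ℕ) : (fwdDiff (1:ℕ))^[p] (0 : ℕ → G) = 0 := by
  have h1 : fwdDiff (1:ℕ) (0 : ℕ → G) = 0 := by
    funext k; simp [fwdDiff]
  induction p with
  | zero => simp
  | succ p ih => rw [iterate_succ_apply, h1, ih]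

lemma fd_mono {f : ℕ → G} {p q : ℕ} (hf : (fwdDiff (1:ℕ))^[p] f = 0) (hpq : p ≤ q) :
    (fwdDiff (1:ℕ))^[q] f = 0 := by
  obtain ⟨d, rfl⟩ := Nat.exists_eq_add_of_le hpq
  rw [add_comm, iterate_add_apply, hf, fd_zero]

lemma fd_smul_const_iter (g : ℕ → ℤ) (r : G) (p : ℕ) :
    (fwdDiff (1:ℕ))^[p] (fun k => g k • r) = fun k => ((fwdDiff (1:ℕ))^[p] g k) • r := by
  induction p generalizing g with
  | zero => simp
  | succ p ih =>
    rw [iterate_succ_apply, iterate_succ_apply]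
    have : fwdDiff (1:ℕ) (fun k => g k • r) = fun k => (fwdDiff (1:ℕ) g k) • r := by
      funext k; simp [fwdDiff, sub_smul]
    rw [this, ih]

lemma fd_choose (i : ℕ) (r : G) :
    (fwdDiff (1:ℕ))^[i+1] (fun k : ℕ => (k.choose i : ℤ) • r) = 0 := by
  rw [fd_smul_const_iter]
  have h0 : (fwdDiff (1:ℕ))^[i+1] (fun k : ℕ => (k.choose i : ℤ)) = 0 := by
    rw [iterate_succ_apply']
    have h1 := fwdDiff_iter_choose 0 i
    simp only [add_zero] at h1
    rw [h1]
    funext k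
    simp [fwdDiff]
  rw [h0]
  funext k; simp

lemma fd_pow_int (t : ℕ) : (fwdDiff (1:ℕ))^[t+1] (fun k : ℕ => (k:ℤ)^t) = 0 := by
  induction t using Nat.strong_induction_on with
  | _ t ih =>
    rw [iterate_succ_apply]
    have hΔ : fwdDiff (1:ℕ) (fun k : ℕ => (k:ℤ)^t) =
        ∑ j ∈ Finset.range t, (fun k : ℕ => (t.choose j : ℤ) * (k:ℤ)^j) := by
      funext k
      simp only [fwdDiff, Finset.sum_apply]
      push_cast
      rw [add_pow, Finset.sum_range_succ]
      simp only [one_pow, mul_one, Nat.choose_self, Nat.cast_one]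
      rw [add_sub_cancel_right]
      exact Finset.sum_congr rfl fun j _ => by ring
    rw [hΔ, fwdDiff_iter_finset_sum]
    apply Finset.sum_eq_zero
    intro j hj
    have hj' : j < t := Finset.mem_range.mp hj
    have h2 : (fun k : ℕ => (t.choose j : ℤ) * (k:ℤ)^j)
        = (t.choose j : ℤ) • (fun k : ℕ => (k:ℤ)^j) := by
      funext k; simp
    rw [h2, fwdDiff_iter_const_smul, fd_mono (ih j hj') (by omega), smul_zero]

lemma fd_pow_smul (t : ℕ) (r : G) :
    (fwdDiff (1:ℕ))^[t+1] (fun k : ℕ => (k:ℤ)^t • r) = 0 := by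
  rw [fd_smul_const_iter, fd_pow_int]
  funext k; simp

lemma isAP_of_fd {u : ℕ → G} {E : ℕ}
    (hu : (fwdDiff (1:ℕ))^[E+1] u = 0) : IsAPOfOrder u E := by
  intro n
  have h := fwdDiff_iter_eq_sum_shift (1:ℕ) u (E+1) n
  rw [hu] at h
  simpa using h.symm

lemma fd_W (c : ℕ → G) (h s : ℕ) :
    (fwdDiff (1:ℕ))^[h+1]
      (fun k : ℕ => ∑ t ∈ Finset.range (h+1), ((k:ℤ) - (s:ℤ))^t • c t) = 0 := by
  have hrw : (fun k : ℕ => ∑ t ∈ Finset.range (h+1), ((k:ℤ) - (s:ℤ))^t • c t)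
      = ∑ t ∈ Finset.range (h+1), ∑ j ∈ Finset.range (t+1),
          (fun k : ℕ => (k:ℤ)^j • (((-(s:ℤ))^(t-j) * (t.choose j : ℤ)) • c t)) := by
    funext k
    rw [Finset.sum_apply]
    apply Finset.sum_congr rfl
    intro t _
    rw [Finset.sum_apply]
    rw [sub_eq_add_neg, add_pow, Finset.sum_smul]
    apply Finset.sum_congr rfl
    intro j _
    rw [smul_smul, mul_assoc]
  rw [hrw, fwdDiff_iter_finset_sum]
  apply Finset.sum_eq_zero
  intro t ht
  rw [fwdDiff_iter_finset_sum]
  apply Finset.sum_eq_zero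
  intro j hj
  have ht' := Finset.mem_range.mp ht
  have hj' := Finset.mem_range.mp hj
  exact fd_mono (fd_pow_smul j _) (by omega)

lemma fd_shift (g : ℕ → G) (p : ℕ) :
    (fwdDiff (1:ℕ))^[p] (fun k => g (k+1)) = fun k => (fwdDiff (1:ℕ))^[p] g (k+1) := by
  induction p generalizing g with
  | zero => simp
  | succ p ih =>
    rw [iterate_succ_apply, iterate_succ_apply]
    have : fwdDiff (1:ℕ) (fun k => g (k+1)) = fun k => fwdDiff (1:ℕ) g (k+1) := rfl
    rw [this, ih]

end helpers

section helpers2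
variable {R : Type*} [Ring R]

lemma fd_conj (A B : R) (f : ℕ → R) (p : ℕ) :
    (fwdDiff (1:ℕ))^[p] (fun k => A * f k * B) = fun k => A * ((fwdDiff (1:ℕ))^[p] f k) * B := by
  induction p generalizing f with
  | zero => simp
  | succ p ih =>
    rw [iterate_succ_apply, iterate_succ_apply]
    have : fwdDiff (1:ℕ) (fun k => A * f k * B) = fun k => A * (fwdDiff (1:ℕ) f k) * B := by
      funext k; simp [fwdDiff, mul_sub, sub_mul]
    rw [this, ih]

lemma fd_leibniz (f g : ℕ → R) :
    fwdDiff (1:ℕ) (fun k => f k * g k) =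
      (fun k => fwdDiff (1:ℕ) f k * g (k+1)) + fun k => f k * fwdDiff (1:ℕ) g k := by
  funext k
  simp only [fwdDiff, Pi.add_apply, sub_mul, mul_sub]
  abel

lemma fd_mul : ∀ N p q : ℕ, ∀ f g : ℕ → R, p + q ≤ N →
    (fwdDiff (1:ℕ))^[p+1] f = 0 → (fwdDiff (1:ℕ))^[q+1] g = 0 →
    (fwdDiff (1:ℕ))^[p+q+1] (fun k => f k * g k) = 0 := by
  intro N
  induction N with
  | zero =>
    intro p q f g hpq hf hg
    obtain rfl : p = 0 := by omega
    obtain rfl : q = 0 := by omega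
    simp only [Nat.add_zero, Nat.zero_add, iterate_one] at hf hg ⊢
    rw [fd_leibniz, hf, hg]
    funext k; simp
  | succ N ihN =>
    intro p q f g hpq hf hg
    rw [iterate_succ_apply, fd_leibniz, fwdDiff_iter_add]
    have hF1 : (fwdDiff (1:ℕ))^[p+q] (fun k => fwdDiff (1:ℕ) f k * g (k+1)) = 0 := by
      match p with
      | 0 =>
        simp only [Nat.zero_add, iterate_one] at hf
        rw [hf]
        have : (fun k => (0 : ℕ → R) k * g (k+1)) = (0 : ℕ → R) := by funext k; simp
        rw [this, fd_zero]
      | p' + 1 =>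
        have h1 : (fwdDiff (1:ℕ))^[p'+1] (fwdDiff (1:ℕ) f) = 0 := by
          rw [← iterate_succ_apply]; exact hf
        have h2 : (fwdDiff (1:ℕ))^[q+1] (fun k => g (k+1)) = 0 := by
          rw [fd_shift, hg]; funext k; simp
        have := ihN p' q (fwdDiff (1:ℕ) f) (fun k => g (k+1)) (by omega) h1 h2
        have he : p' + 1 + q = p' + q + 1 := by omega
        rw [he]; exact this
    have hF2 : (fwdDiff (1:ℕ))^[p+q] (fun k => f k * fwdDiff (1:ℕ) g k) = 0 := by
      match q with
      | 0 =>
        simp only [Nat.zero_add, iterate_one] at hg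
        rw [hg]
        have : (fun k => f k * (0 : ℕ → R) k) = (0 : ℕ → R) := by funext k; simp
        rw [this, fd_zero]
      | q' + 1 =>
        have h1 : (fwdDiff (1:ℕ))^[q'+1] (fwdDiff (1:ℕ) g) = 0 := by
          rw [← iterate_succ_apply]; exact hg
        have := ihN p q' f (fwdDiff (1:ℕ) g) (by omega) hf h1
        have he : p + (q' + 1) = p + q' + 1 := by omega
        rw [he]; exact this
    rw [hF1, hF2]; simp

lemma mid_eq (x y : R) (c : ℕ → R) (h : ℕ)
    (hpoly : ∀ k : ℕ, y ^ k * x ^ k = ∑ ℓ ∈ Finset.range (h + 1), (k ^ ℓ) • c ℓ)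
    (i j k : ℕ) (hik : i ≤ k) (hjk : j ≤ k) :
    y^(k-j) * x^(k-i) = y^(max i j - j) *
      (∑ t ∈ Finset.range (h+1), ((k:ℤ) - ((max i j : ℕ) : ℤ))^t • c t) * x^(max i j - i) := by
  set s := max i j with hs
  have hsk : s ≤ k := max_le hik hjk
  have hW : (∑ t ∈ Finset.range (h+1), ((k:ℤ) - (s:ℤ))^t • c t) = y^(k-s) * x^(k-s) := by
    rw [hpoly (k-s)]
    apply Finset.sum_congr rfl
    intro t _
    rw [← natCast_zsmul]
    congr 1
    push_cast [Nat.cast_sub hsk]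
    ring
  rw [hW]
  have hij : i ≤ s := le_max_left i j
  have hji : j ≤ s := le_max_right i j
  rw [show k - j = (s - j) + (k - s) by omega, show k - i = (k - s) + (s - i) by omega,
    pow_add, pow_add]
  noncomm_ring

lemma expand_pow_right (x a : R) {n : ℕ} (hax : a * x = x * a) (ha : a^n = 0) (k : ℕ) :
    (x+a)^k = ∑ i ∈ Finset.range n, (k.choose i) • (x^(k-i) * a^i) := by
  have hc : Commute x a := (Commute.symm hax)
  rw [hc.add_pow]
  have hre := (Finset.sum_range_reflect (fun i => x ^ i * a ^ (k - i) * (k.choose i : R)) (k+1)).symm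
  simp only [Nat.add_sub_cancel] at hre
  rw [hre]
  have hstep : ∑ i ∈ Finset.range (k+1), x ^ (k - i) * a ^ (k - (k - i)) * (k.choose (k - i) : R)
      = ∑ i ∈ Finset.range (k+1), (k.choose i) • (x^(k-i) * a^i) := by
    apply Finset.sum_congr rfl
    intro i hi
    have hik : i ≤ k := Nat.lt_succ_iff.mp (Finset.mem_range.mp hi)
    rw [Nat.sub_sub_self hik, Nat.choose_symm hik, nsmul_eq_mul,
      (Nat.cast_commute (k.choose i) (x^(k-i) * a^i)).eq]
  rw [hstep]
  rcases le_total (k+1) n with hkn | hnk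
  · apply Finset.sum_subset (Finset.range_subset_range.mpr hkn)
    intro i _ hi
    have : k < i := by simpa using hi
    rw [Nat.choose_eq_zero_of_lt this, zero_smul]
  · symm
    apply Finset.sum_subset (Finset.range_subset_range.mpr hnk)
    intro i _ hi
    have hni : n ≤ i := by simpa using hi
    have : a ^ i = 0 := by
      rw [show i = n + (i - n) by omega, pow_add, ha, zero_mul]
    rw [this, mul_zero, smul_zero]

lemma expand_pow_left (y b : R) {m : ℕ} (hby : b * y = y * b) (hb : b^m = 0) (k : ℕ) :
    (y+b)^k = ∑ j ∈ Finset.range m, (k.choose j) • (b^j * y^(k-j)) := by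
  have hc : Commute b y := hby
  rw [add_comm, hc.add_pow]
  have hstep : ∑ j ∈ Finset.range (k+1), b ^ j * y ^ (k - j) * (k.choose j : R)
      = ∑ j ∈ Finset.range (k+1), (k.choose j) • (b^j * y^(k-j)) := by
    apply Finset.sum_congr rfl
    intro j _
    rw [nsmul_eq_mul, (Nat.cast_commute (k.choose j) (b^j * y^(k-j))).eq]
  rw [hstep]
  rcases le_total (k+1) m with hkm | hmk
  · apply Finset.sum_subset (Finset.range_subset_range.mpr hkm)
    intro j _ hj
    have : k < j := by simpa using hj
    rw [Nat.choose_eq_zero_of_lt this, zero_smul]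
  · symm
    apply Finset.sum_subset (Finset.range_subset_range.mpr hmk)
    intro j _ hj
    have hmj : m ≤ j := by simpa using hj
    have : b ^ j = 0 := by
      rw [show j = m + (j - m) by omega, pow_add, hb, zero_mul]
    rw [this, zero_mul, smul_zero]

end helpers2

theorem stmt_10 {R : Type*} [Ring R] (h m n : ℕ) (hm : 1 ≤ m) (hn : 1 ≤ n)
    (x y a b : R)
    (c : ℕ → R) (hch : c h ≠ 0)
    (hpoly : ∀ k : ℕ, y ^ k * x ^ k = ∑ ℓ ∈ Finset.range (h + 1), (k ^ ℓ) • c ℓ)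
    (ha : a ^ n = 0) (hb : b ^ m = 0)
    (hax : a * x = x * a) (hby : b * y = y * b) :
    IsAPOfOrder (fun k => (y + b) ^ k * (x + a) ^ k) (n + m + h - 2) := by
  apply isAP_of_fd
  have hE : n + m + h - 2 + 1 = n + m + h - 1 := by omega
  rw [hE]
  have hu : (fun k => (y + b) ^ k * (x + a) ^ k)
      = ∑ j ∈ Finset.range m, ∑ i ∈ Finset.range n,
          (fun k : ℕ => ((k.choose j) • (b^j))
            * (y^(max i j - j)
                * (∑ t ∈ Finset.range (h+1), ((k:ℤ) - ((max i j : ℕ) : ℤ))^t • c t)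
                * x^(max i j - i))
            * ((k.choose i) • (a^i))) := by
    funext k
    simp only [Finset.sum_apply]
    rw [expand_pow_left y b hby hb k, expand_pow_right x a hax ha k, Finset.sum_mul_sum]
    apply Finset.sum_congr rfl
    intro j _
    apply Finset.sum_congr rfl
    intro i _
    by_cases hcase : i ≤ k ∧ j ≤ k
    · obtain ⟨hik, hjk⟩ := hcase
      simp only [smul_mul_assoc, mul_smul_comm]
      congr 2
      calc b^j * y^(k-j) * (x^(k-i) * a^i)
          = b^j * (y^(k-j) * x^(k-i)) * a^i := by noncomm_ring
        _ = b^j * (y^(max i j - j)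
              * (∑ t ∈ Finset.range (h+1), ((k:ℤ) - ((max i j : ℕ) : ℤ))^t • c t)
              * x^(max i j - i)) * a^i := by
            rw [mid_eq x y c h hpoly i j k hik hjk]
    · rw [not_and_or, not_le, not_le] at hcase
      rcases hcase with hik | hjk
      · rw [Nat.choose_eq_zero_of_lt hik]; simp
      · rw [Nat.choose_eq_zero_of_lt hjk]; simp
  rw [hu, fwdDiff_iter_finset_sum]
  apply Finset.sum_eq_zero
  intro j hj
  rw [fwdDiff_iter_finset_sum]
  apply Finset.sum_eq_zero
  intro i hi
  have hi' : i < n := Finset.mem_range.mp hi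
  have hj' : j < m := Finset.mem_range.mp hj
  have hf1 : (fwdDiff (1:ℕ))^[j+1] (fun k : ℕ => (k.choose j) • (b^j : R)) = 0 := by
    have : (fun k : ℕ => (k.choose j) • (b^j : R)) = fun k : ℕ => ((k.choose j : ℤ)) • (b^j : R) := by
      funext k; rw [natCast_zsmul]
    rw [this]
    exact fd_choose j _
  have hf3 : (fwdDiff (1:ℕ))^[i+1] (fun k : ℕ => (k.choose i) • (a^i : R)) = 0 := by
    have : (fun k : ℕ => (k.choose i) • (a^i : R)) = fun k : ℕ => ((k.choose i : ℤ)) • (a^i : R) := by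
      funext k; rw [natCast_zsmul]
    rw [this]
    exact fd_choose i _
  have hmid : (fwdDiff (1:ℕ))^[h+1]
      (fun k : ℕ => y^(max i j - j)
        * (∑ t ∈ Finset.range (h+1), ((k:ℤ) - ((max i j : ℕ) : ℤ))^t • c t)
        * x^(max i j - i)) = 0 := by
    rw [fd_conj]
    simp only [fd_W c h (max i j)]
    funext k; simp
  have h12 := fd_mul (j+h) j h _ _ le_rfl hf1 hmid
  have h123 := fd_mul (j+h+i) (j+h) i _ _ le_rfl h12 hf3
  exact fd_mono h123 (by omega)
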